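/- The numerical semigroup generated by q, q + q0, q + 2q0, q + 2q0 + 1, where q = 2^(2s+1) and q0 = 2^s, has genus q0(q - 1) (i.e., exactly q0(q-1) positive integers lie outside the semigroup). -/

import Mathlib

open Finset

/-- Sum of ⌈(t+1)/2⌉-ish halves. -/
private lemma sum_halves (k : ℕ) : ∑ t ∈ Finset.range (2*k), (t+1)/2 = k*k := by
  induction k with
  | zero => simp
  | succ n ih =>
    rw [show 2*(n+1) = (2*n)+1+1 by ring, Finset.sum_range_succ, Finset.sum_range_succ, ih,
      show (2*n+1)/2 = n by omega, show (2*n+1+1)/2 = n+1 by omega]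
    ring

private lemma suz_mem_closure_iff (q q0 n : ℕ) :
    n ∈ AddSubmonoid.closure ({q, q + q0, q + 2 * q0, q + 2 * q0 + 1} : Set ℕ) ↔
      ∃ m t d : ℕ, t ≤ 2*m ∧ 2*d ≤ t ∧ n = m*q + t*q0 + d := by
  constructor
  · intro h
    induction h using AddSubmonoid.closure_induction with
    | mem x hx =>
      simp only [Set.mem_insert_iff, Set.mem_singleton_iff] at hx
      rcases hx with rfl | rfl | rfl | rfl
      · exact ⟨1, 0, 0, by omega, by omega, by ring⟩
      · exact ⟨1, 1, 0, by omega, by omega, by ring⟩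
      · exact ⟨1, 2, 0, by omega, by omega, by ring⟩
      · exact ⟨1, 2, 1, by omega, by omega, by ring⟩
    | zero => exact ⟨0, 0, 0, le_refl _, le_refl _, by ring⟩
    | add x y hx hy ihx ihy =>
      obtain ⟨m1, t1, d1, h1, h2, rfl⟩ := ihx
      obtain ⟨m2, t2, d2, h3, h4, rfl⟩ := ihy
      exact ⟨m1+m2, t1+t2, d1+d2, by omega, by omega, by ring⟩
  · rintro ⟨m, t, d, htm, hdt, rfl⟩
    set C := AddSubmonoid.closure ({q, q + q0, q + 2 * q0, q + 2 * q0 + 1} : Set ℕ) with hC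
    have hmul : ∀ (k x : ℕ), x ∈ C → k * x ∈ C := fun k x hx => by
      simpa [nsmul_eq_mul] using C.nsmul_mem hx k
    have g1 : q ∈ C := AddSubmonoid.subset_closure (by simp)
    have g2 : q + q0 ∈ C := AddSubmonoid.subset_closure (by simp)
    have g3 : q + 2*q0 ∈ C := AddSubmonoid.subset_closure (by simp)
    have g4 : q + 2*q0 + 1 ∈ C := AddSubmonoid.subset_closure (by simp)
    set e := t - 2*d with he
    have key : m*q + t*q0 + d =
        (m - (d + e/2 + e%2))*q + (e%2)*(q+q0) + (e/2)*(q+2*q0) + d*(q+2*q0+1) := by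
      have h3 : m - (d + e/2 + e%2) + (e%2) + (e/2) + d = m := by omega
      have h4 : (e%2) + 2*(e/2) + 2*d = t := by omega
      calc m*q + t*q0 + d
          = (m - (d + e/2 + e%2) + (e%2) + (e/2) + d)*q + ((e%2) + 2*(e/2) + 2*d)*q0 + d := by
            rw [h3, h4]
        _ = _ := by ring
    rw [key]
    exact add_mem (add_mem (add_mem (hmul _ _ g1) (hmul _ _ g2)) (hmul _ _ g3)) (hmul _ _ g4)

/-- The key arithmetic case analysis. -/
private lemma crit_arith (q0 m t d α δ β τ : ℕ) (hq0 : 1 ≤ q0)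
    (hdt : 2*d ≤ t) (htm : t ≤ 2*m) (hd : q0*α + δ = d) (hδ : δ < q0)
    (hτ : τ < 2*q0) (hT : 2*(q0*β) + τ = t + α) :
    (2*δ ≤ τ ∧ τ ≤ 2*(m+β)) ∨ (τ + 2*q0 + 2 ≤ 2*(m+β)) := by
  have hαβ : α ≤ β := by
    by_contra hc
    push_neg at hc
    have h5 : q0*(β+1) ≤ q0*α := Nat.mul_le_mul_left _ hc
    rw [Nat.mul_add, Nat.mul_one] at h5
    omega
  match β with
  | 0 =>
    left
    simp only [Nat.mul_zero] at hT
    omega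
  | 1 =>
    rw [Nat.mul_one] at hT
    interval_cases α
    · right; simp only [Nat.mul_zero] at hd; omega
    · left; rw [Nat.mul_one] at hd; omega
  | (b+2) =>
    right
    have h6 : q0*(b+2) = q0*b + 2*q0 := by ring
    rw [h6] at hT
    have h7 : b ≤ q0*b := Nat.le_mul_of_pos_left b hq0
    omega

private lemma decomp (q q0 : ℕ) (hq0 : 0 < q0) (hq2 : q = 2*q0*q0) (n : ℕ) :
    n = (n/q)*q + (n/q0 % (2*q0))*q0 + n % q0 := by
  have hq2' : q0*(2*q0) = q := by rw [hq2]; ring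
  have h1 := Nat.div_add_mod n q0
  have h2 := Nat.div_add_mod (n/q0) (2*q0)
  have h3 : n/q0/(2*q0) = n/q := by rw [Nat.div_div_eq_div_mul, hq2']
  calc n = q0*(n/q0) + n % q0 := h1.symm
    _ = q0*(2*q0*(n/q0/(2*q0)) + n/q0 % (2*q0)) + n % q0 := by rw [h2]
    _ = (n/q0/(2*q0))*(q0*(2*q0)) + (n/q0 % (2*q0))*q0 + n % q0 := by ring
    _ = (n/q)*q + (n/q0 % (2*q0))*q0 + n % q0 := by rw [h3, hq2']

private lemma coords (q q0 : ℕ) (hq0 : 0 < q0) (hq2 : q = 2*q0*q0) (m t d : ℕ)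
    (ht : t < 2*q0) (hd : d < q0) :
    (m*q + t*q0 + d)/q = m ∧ (m*q + t*q0 + d)/q0 % (2*q0) = t ∧ (m*q + t*q0 + d) % q0 = d := by
  have hq2' : q0*(2*q0) = q := by rw [hq2]; ring
  have hne : m*q + t*q0 + d = d + (m*(2*q0) + t)*q0 := by rw [← hq2']; ring
  have hdiv : (m*q + t*q0 + d)/q0 = m*(2*q0) + t := by
    rw [hne, Nat.add_mul_div_right _ _ hq0, Nat.div_eq_of_lt hd, Nat.zero_add]
  have hmod : (m*q + t*q0 + d) % q0 = d := by
    rw [hne, Nat.add_mul_mod_self_right, Nat.mod_eq_of_lt hd]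
  refine ⟨?_, ?_, hmod⟩
  · have h9 : (m*q + t*q0 + d)/q = (m*q + t*q0 + d)/q0/(2*q0) := by
      rw [Nat.div_div_eq_div_mul, hq2']
    rw [h9, hdiv, Nat.mul_comm m (2*q0), Nat.mul_add_div (by omega), Nat.div_eq_of_lt ht,
      Nat.add_zero]
  · rw [hdiv, Nat.mul_comm m (2*q0), Nat.mul_add_mod, Nat.mod_eq_of_lt ht]

private lemma mem_iff_crit (q q0 : ℕ) (hq0 : 0 < q0) (hq2 : q = 2*q0*q0) (n : ℕ) :
    n ∈ AddSubmonoid.closure ({q, q + q0, q + 2 * q0, q + 2 * q0 + 1} : Set ℕ) ↔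
      ((2*(n % q0) ≤ n / q0 % (2*q0) ∧ n / q0 % (2*q0) ≤ 2*(n/q)) ∨
        (n / q0 % (2*q0) + 2*q0 + 2 ≤ 2*(n/q))) := by
  rw [suz_mem_closure_iff]
  constructor
  · rintro ⟨m, t, d, htm, hdt, rfl⟩
    obtain ⟨α, δ, hαδ, hδ⟩ : ∃ α δ, q0*α + δ = d ∧ δ < q0 :=
      ⟨d/q0, d%q0, Nat.div_add_mod d q0, Nat.mod_lt _ hq0⟩
    obtain ⟨β, τ, hβτ, hτ⟩ : ∃ β τ, (2*q0)*β + τ = t + α ∧ τ < 2*q0 :=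
      ⟨(t+α)/(2*q0), (t+α)%(2*q0), Nat.div_add_mod _ _, Nat.mod_lt _ (by omega)⟩
    have hco := coords q q0 hq0 hq2 (m+β) τ δ hτ hδ
    have hrw : m*q + t*q0 + d = (m+β)*q + τ*q0 + δ := by
      have : q0*((2*q0)*β + τ) = q0*(t+α) := by rw [hβτ]
      calc m*q + t*q0 + d = m*q + t*q0 + (q0*α + δ) := by rw [hαδ]
        _ = m*q + q0*(t+α) + δ := by ring
        _ = m*q + q0*((2*q0)*β + τ) + δ := by rw [hβτ]
        _ = m*q + β*(2*q0*q0) + τ*q0 + δ := by ring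
        _ = (m+β)*q + τ*q0 + δ := by rw [hq2]; ring
    rw [hrw, hco.1, hco.2.1, hco.2.2]
    exact crit_arith q0 m t d α δ β τ hq0 hdt htm hαδ hδ hτ
      (by rw [← hβτ]; ring)
  · intro h
    have hdec := decomp q q0 hq0 hq2 n
    have hd0lt : n % q0 < q0 := Nat.mod_lt _ hq0
    rcases h with ⟨h1, h2⟩ | h1
    · exact ⟨n/q, n / q0 % (2*q0), n % q0, h2, h1, hdec⟩
    · obtain ⟨m', hm'⟩ : ∃ m', n/q = m' + 1 := ⟨n/q - 1, by omega⟩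
      refine ⟨m', n / q0 % (2*q0) + 2*q0, n % q0, by omega, by omega, ?_⟩
      conv_lhs => rw [hdec]
      rw [hm', hq2]; ring

private lemma count_m (q0 t d : ℕ) (hq0 : 0 < q0) (ht : t < 2*q0) (hd : d < q0) :
    ((Finset.range (2*q0+1)).filter
      (fun m => ¬((2*d ≤ t ∧ t ≤ 2*m) ∨ (t + 2*q0 + 2 ≤ 2*m)))).card
      = (t+1)/2 + (if 2*d ≤ t then 0 else q0+1) := by
  have : (Finset.range (2*q0+1)).filter
      (fun m => ¬((2*d ≤ t ∧ t ≤ 2*m) ∨ (t + 2*q0 + 2 ≤ 2*m)))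
      = Finset.range ((t+1)/2 + (if 2*d ≤ t then 0 else q0+1)) := by
    ext m
    simp only [Finset.mem_filter, Finset.mem_range]
    split_ifs with h <;> omega
  rw [this, Finset.card_range]

private lemma final_arith (q q0 : ℕ) (h2 : 2 ≤ q0) (hq2 : q = 2*q0*q0) :
    q0*(q0*q0) + q0*(q0-1)*(q0+1) = q0*(q-1) := by
  obtain ⟨b, rfl⟩ : ∃ b, q0 = b+1 := ⟨q0-1, by omega⟩
  have hq1 : q - 1 = 2*b*b+4*b+1 := by
    rw [hq2, show 2*(b+1)*(b+1) = (2*b*b+4*b+1)+1 by ring, Nat.add_sub_cancel]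
  rw [hq1, Nat.add_sub_cancel]
  ring

theorem stmt_11 (s : ℕ) (hs : 1 ≤ s) (q q₀ : ℕ)
    (hq : q = 2 ^ (2 * s + 1)) (hq₀ : q₀ = 2 ^ s) :
    Nat.card {n : ℕ //
        n ∉ AddSubmonoid.closure ({q, q + q₀, q + 2 * q₀, q + 2 * q₀ + 1} : Set ℕ)} =
      q₀ * (q - 1) := by
  have hq2 : q = 2*q₀*q₀ := by
    rw [hq, hq₀, show 2*s+1 = s+s+1 by ring, pow_add, pow_add, pow_one]; ring
  have hq0pos : 0 < q₀ := by rw [hq₀]; positivity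
  have hq0two : 2 ≤ q₀ := by
    rw [hq₀]; calc 2 = 2^1 := by norm_num
      _ ≤ 2^s := Nat.pow_le_pow_right (by norm_num) hs
  have hqpos : 0 < q := by rw [hq]; positivity
  set S := AddSubmonoid.closure ({q, q + q₀, q + 2 * q₀, q + 2 * q₀ + 1} : Set ℕ) with hS
  set F : Finset ℕ := (Finset.range ((2*q₀+1)*q)).filter
    (fun n => ¬((2*(n % q₀) ≤ n / q₀ % (2*q₀) ∧ n / q₀ % (2*q₀) ≤ 2*(n/q)) ∨
        (n / q₀ % (2*q₀) + 2*q₀ + 2 ≤ 2*(n/q)))) with hF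
  have hset : {n : ℕ | n ∉ S} = (F : Set ℕ) := by
    ext n
    simp only [Set.mem_setOf_eq, hS, Finset.coe_filter, hF, Finset.mem_range, Set.mem_setOf_eq,
      mem_iff_crit q q₀ hq0pos hq2 n]
    constructor
    · intro h
      refine ⟨?_, h⟩
      by_contra hb
      push_neg at hb
      have hm : 2*q₀+1 ≤ n/q := (Nat.le_div_iff_mul_le hqpos).2 hb
      have ht : n / q₀ % (2*q₀) < 2*q₀ := Nat.mod_lt _ (by omega)
      exact h (Or.inr (by omega))
    · exact fun h => h.2
  have hcard1 : Nat.card {n : ℕ // n ∉ S} = F.card := by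
    calc Nat.card {n : ℕ // n ∉ S} = Nat.card ↥((F : Set ℕ)) :=
        Nat.card_congr (Equiv.setCongr hset)
      _ = (F : Set ℕ).ncard := Nat.card_coe_set_eq _
      _ = F.card := Set.ncard_coe_finset F
  rw [hcard1]
  -- bijection with triple product
  have hFG : F.card = (((Finset.range (2*q₀+1)) ×ˢ (Finset.range (2*q₀) ×ˢ Finset.range q₀)).filter
      (fun p => ¬((2*p.2.2 ≤ p.2.1 ∧ p.2.1 ≤ 2*p.1) ∨ (p.2.1 + 2*q₀ + 2 ≤ 2*p.1)))).card := by
    apply Finset.card_bij' (fun n _ => (n/q, (n / q₀ % (2*q₀), n % q₀)))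
      (fun p _ => p.1*q + p.2.1*q₀ + p.2.2)
    · intro n hn
      simp only [hF, Finset.mem_filter, Finset.mem_range] at hn
      simp only [Finset.mem_filter, Finset.mem_product, Finset.mem_range]
      refine ⟨⟨?_, Nat.mod_lt _ (by omega), Nat.mod_lt _ hq0pos⟩, ?_⟩
      · exact Nat.div_lt_of_lt_mul (by rw [Nat.mul_comm] at hn; exact hn.1)
      · exact hn.2
    · intro p hp
      simp only [Finset.mem_filter, Finset.mem_product, Finset.mem_range] at hp
      obtain ⟨⟨hm, ht, hd⟩, hnp⟩ := hp
      have hco := coords q q₀ hq0pos hq2 p.1 p.2.1 p.2.2 ht hd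
      simp only [hF, Finset.mem_filter, Finset.mem_range]
      constructor
      · have h1 : p.2.1*q₀ + p.2.2 < q := by
          have h3 : (p.2.1+1)*q₀ ≤ 2*q₀*q₀ := Nat.mul_le_mul_right _ (by omega)
          have h2 : p.2.1*q₀ + q₀ = (p.2.1+1)*q₀ := by ring
          omega
        calc p.1*q + p.2.1*q₀ + p.2.2 < p.1*q + q := by omega
          _ = (p.1+1)*q := by ring
          _ ≤ (2*q₀+1)*q := Nat.mul_le_mul_right _ (by omega)
      · rw [hco.1, hco.2.1, hco.2.2]; exact hnp
    · intro n hn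
      exact (decomp q q₀ hq0pos hq2 n).symm
    · intro p hp
      simp only [Finset.mem_filter, Finset.mem_product, Finset.mem_range] at hp
      obtain ⟨⟨hm, ht, hd⟩, hnp⟩ := hp
      have hco := coords q q₀ hq0pos hq2 p.1 p.2.1 p.2.2 ht hd
      ext <;> simp [hco.1, hco.2.1, hco.2.2]
  rw [hFG, Finset.card_filter, Finset.sum_product]
  rw [Finset.sum_comm]
  have hstep : ∀ td ∈ Finset.range (2*q₀) ×ˢ Finset.range q₀,
      (∑ m ∈ Finset.range (2*q₀+1),
        if ¬((2*td.2 ≤ td.1 ∧ td.1 ≤ 2*m) ∨ (td.1 + 2*q₀ + 2 ≤ 2*m)) then 1 else 0)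
      = (td.1+1)/2 + (if 2*td.2 ≤ td.1 then 0 else q₀+1) := by
    intro td htd
    simp only [Finset.mem_product, Finset.mem_range] at htd
    rw [← Finset.card_filter]
    exact count_m q₀ td.1 td.2 hq0pos htd.1 htd.2
  rw [Finset.sum_congr rfl hstep, Finset.sum_add_distrib]
  have hpart1 : ∑ td ∈ Finset.range (2*q₀) ×ˢ Finset.range q₀, (td.1+1)/2 = q₀*(q₀*q₀) := by
    rw [Finset.sum_product]
    simp only [Finset.sum_const, Finset.card_range, smul_eq_mul]
    rw [← Finset.mul_sum, sum_halves]
  have hpart2 : ∑ td ∈ Finset.range (2*q₀) ×ˢ Finset.range q₀,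
      (if 2*td.2 ≤ td.1 then 0 else q₀+1) = q₀*(q₀-1)*(q₀+1) := by
    rw [Finset.sum_product, Finset.sum_comm]
    have hinner : ∀ d ∈ Finset.range q₀,
        (∑ t ∈ Finset.range (2*q₀), if 2*d ≤ t then 0 else q₀+1) = 2*d*(q₀+1) := by
      intro d hd
      rw [Finset.mem_range] at hd
      have h1 : ∀ t ∈ Finset.range (2*q₀),
          (if 2*d ≤ t then 0 else q₀+1) = (if t < 2*d then q₀+1 else 0) := by
        intro t _; split_ifs <;> omega
      rw [Finset.sum_congr rfl h1, ← Finset.sum_filter]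
      have h2 : (Finset.range (2*q₀)).filter (fun t => t < 2*d) = Finset.range (2*d) := by
        ext a; simp only [Finset.mem_filter, Finset.mem_range]; omega
      rw [h2, Finset.sum_const, Finset.card_range, smul_eq_mul]
    rw [Finset.sum_congr rfl hinner]
    have h3 : ∀ d ∈ Finset.range q₀, 2*d*(q₀+1) = d * (2*(q₀+1)) := by
      intro d _; ring
    rw [Finset.sum_congr rfl h3, ← Finset.sum_mul, show (2*(q₀+1)) = 2*(q₀+1) from rfl,
      ← Nat.mul_assoc, Finset.sum_range_id_mul_two]
  rw [hpart1, hpart2]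
  exact final_arith q q₀ hq0two hq2
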